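/- Let G be a U_π-group with an abelian normal subgroup A, let p be a prime in π, and let B = {a ∈ A : a^p = 1}. Then the quotient G/B is a U_π-group; that is, if x^m B = y^m B for x, y ∈ G and m ∈ π′ then xB = yB, provided G/A is π′-torsion-free and A is as in the metabelian setting. -/

import Mathlib

/-- Let `G` be a metabelian `U_π`-group with abelian normal subgroup `A ⊇ G'` and
`G/A` being `π'`-torsion-free, and let `p ∈ π` be a prime. With
`B = {a ∈ A : a^p = 1}`, the quotient `G/B` is a `U_π`-group: if `x^m B = y^m B` for
`m ∈ π'` then `x B = y B`. -/
theorem stmt5 {G : Type*} [Group G] (π : Set ℕ) (p : ℕ) (hp : p.Prime) (hpπ : p ∈ π)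
    (hU : ∀ m : ℕ, 0 < m → (∀ q : ℕ, q.Prime → q ∣ m → q ∉ π) →
      Function.Injective (fun x : G => x ^ m))
    (A : Subgroup G) [A.Normal] (hA : IsMulCommutative A) (hGA : commutator G ≤ A)
    (hGAtf : ∀ x : G, ∀ m : ℕ, 0 < m → (∀ q : ℕ, q.Prime → q ∣ m → q ∉ π) →
      x ^ m ∈ A → x ∈ A)
    (x y : G) (m : ℕ) (hm : 0 < m) (hmπ : ∀ q : ℕ, q.Prime → q ∣ m → q ∉ π)
    (hxy : (x ^ m)⁻¹ * y ^ m ∈ A ∧ ((x ^ m)⁻¹ * y ^ m) ^ p = 1) :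
    x⁻¹ * y ∈ A ∧ (x⁻¹ * y) ^ p = 1 := by
  haveI := hA
  obtain ⟨hc, hcp⟩ := hxy
  -- Step 1: x⁻¹ * y ∈ A, via the abelian quotient G ⧸ A
  have hcommQ : Commute ((x : G) : G ⧸ A) ((y : G) : G ⧸ A) := by
    rw [← commutatorElement_eq_one_iff_commute]
    open scoped commutatorElement in have : (⁅x, y⁆ : G) ∈ A := hGA (Subgroup.commutator_mem_commutator (Subgroup.mem_top x)
      (Subgroup.mem_top y))
    open scoped commutatorElement in simpa [commutatorElement_def] using (QuotientGroup.eq_one_iff (⁅x, y⁆ : G)).mpr this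
  have hmemA : x⁻¹ * y ∈ A := by
    apply hGAtf _ m hm hmπ
    rw [← QuotientGroup.eq_one_iff]
    have h1 : (((x ^ m)⁻¹ * y ^ m : G) : G ⧸ A) = 1 := (QuotientGroup.eq_one_iff _).mpr hc
    calc (((x⁻¹ * y) ^ m : G) : G ⧸ A)
        = (((x : G) : G ⧸ A)⁻¹ * ((y : G) : G ⧸ A)) ^ m := by simp
      _ = (((x : G) : G ⧸ A)⁻¹) ^ m * ((y : G) : G ⧸ A) ^ m := (hcommQ.inv_left).mul_pow m
      _ = (((x ^ m)⁻¹ * y ^ m : G) : G ⧸ A) := by simp [inv_pow]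
      _ = 1 := h1
  -- Step 2: the key computation
  set a : G := x⁻¹ * y with ha
  have key : ∀ n : ℕ, ∃ c : G, c ∈ A ∧ (x * a) ^ n = x ^ n * c ∧
      (x * a ^ p) ^ n = x ^ n * c ^ p := by
    intro n
    induction n with
    | zero => exact ⟨1, one_mem A, by simp, by simp⟩
    | succ n ih =>
      obtain ⟨c, hcA, h1, h2⟩ := ih
      have hxcx : x⁻¹ * c * x ∈ A := by
        simpa using Subgroup.Normal.conj_mem ‹A.Normal› c hcA x⁻¹
      refine ⟨x⁻¹ * c * x * a, mul_mem hxcx hmemA, ?_, ?_⟩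
      · rw [pow_succ, h1]; group
      · rw [pow_succ, h2]
        have hcomm : Commute (x⁻¹ * c * x) a :=
          Subgroup.mul_comm_of_mem_isMulCommutative A hxcx hmemA
        rw [hcomm.mul_pow]
        have : (x⁻¹ * c * x) ^ p = x⁻¹ * c ^ p * x := by
          simpa using conj_pow (a := x⁻¹) (b := c) (i := p)
        rw [this]; group
  obtain ⟨c, hcA, h1, h2⟩ := key m
  have hxa : x * a = y := by rw [ha]; group
  have hceq : c = (x ^ m)⁻¹ * y ^ m := by
    rw [← hxa, h1]; group
  have h3 : (x * a ^ p) ^ m = x ^ m := by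
    rw [h2, hceq, hcp, mul_one]
  have h4 : x * a ^ p = x := hU m hm hmπ (by simpa using h3)
  have hap : a ^ p = 1 := by
    exact mul_left_cancel (a := x) (by rw [mul_one]; exact h4)
  exact ⟨hmemA, hap⟩
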